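/- Let A, B, C, Y be Polish spaces, let ν be a nonnegative countably additive Borel measure on Y, and let η : A × Y → [0,∞) be a function such that the pair (η, ν) satisfies Condition C1 and ∫_Y η(a,y) ν(dy) = 1 for every a ∈ A. Let g : A × B × C → ℝ be bounded and uniformly continuous. Then for every Markov kernel κ from Y to B, the function f_κ : A × C → ℝ defined by f_κ(a,c) = ∫_Y (∫_B g(a,b,c) κ(y)(db)) η(a,y) ν(dy) is bounded and uniformly continuous on A × C. -/

import Mathlib

open MeasureTheory ProbabilityTheory Filter Topology TopologicalSpace
open scoped ENNReal NNReal

noncomputable section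

/-- Condition **C1** of the paper: the pair `(η, ν)` consists of a jointly continuous
function `η` together with a "variation control" function `h` which is bounded, has
uniformly bounded `ν`-integrals, and controls the variation of `η` in its first
argument uniformly. -/
def CondC1 {A Y : Type*} [PseudoMetricSpace A] [MeasurableSpace A]
    [TopologicalSpace Y] [MeasurableSpace Y]
    (η : A → Y → ℝ) (ν : Measure Y) : Prop :=
  Continuous (fun p : A × Y => η p.1 p.2) ∧
  ∃ h : A → Y → ℝ,
    (∀ a y, 0 ≤ h a y) ∧
    Measurable (fun p : A × Y => h p.1 p.2) ∧
    (∃ Cb : ℝ, ∀ a y, h a y ≤ Cb) ∧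
    (∃ M : ℝ≥0∞, M ≠ ⊤ ∧ ∀ a, (∫⁻ y, ENNReal.ofReal (h a y) ∂ν) ≤ M) ∧
    (∀ ε : ℝ, 0 < ε → ∃ δ : ℝ, 0 < δ ∧
      ∀ a₀ a : A, dist a a₀ < δ → ∀ y, |η a y - η a₀ y| < ε * h a₀ y)

/-- For every Markov kernel `κ` from `Y` to `B`, the function
`f_κ(a,c) = ∫ (∫ g(a,b,c) κ(y)(db)) η(a,y) ν(dy)` is bounded and uniformly continuous. -/
theorem stmt_1
    {A B C Y : Type*}
    [MetricSpace A] [CompleteSpace A] [SeparableSpace A] [MeasurableSpace A] [BorelSpace A]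
    [MetricSpace B] [CompleteSpace B] [SeparableSpace B] [MeasurableSpace B] [BorelSpace B]
    [MetricSpace C] [CompleteSpace C] [SeparableSpace C] [MeasurableSpace C] [BorelSpace C]
    [MetricSpace Y] [CompleteSpace Y] [SeparableSpace Y] [MeasurableSpace Y] [BorelSpace Y]
    (ν : Measure Y)
    (η : A → Y → ℝ) (hηnn : ∀ a y, 0 ≤ η a y)
    (hC1 : CondC1 η ν)
    (hnorm : ∀ a, (∫⁻ y, ENNReal.ofReal (η a y) ∂ν) = 1)
    (g : A → B → C → ℝ)
    (hgbdd : ∃ M : ℝ, ∀ a b c, |g a b c| ≤ M)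
    (hguc : UniformContinuous (fun p : A × B × C => g p.1 p.2.1 p.2.2))
    (κ : Kernel Y B) (hκ : IsMarkovKernel κ) :
    (∃ M : ℝ, ∀ z : A × C, |∫ y, (∫ b, g z.1 b z.2 ∂(κ y)) * η z.1 y ∂ν| ≤ M) ∧
    UniformContinuous (fun z : A × C => ∫ y, (∫ b, g z.1 b z.2 ∂(κ y)) * η z.1 y ∂ν) := by
  classical
  rcases isEmpty_or_nonempty (A × C) with hemp | hne
  · constructor
    · exact ⟨0, fun z => (hemp.false z).elim⟩
    · have hbot : (uniformity (A × C)) = ⊥ := Filter.filter_eq_bot_of_isEmpty _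
      unfold UniformContinuous
      rw [hbot]
      exact tendsto_bot
  obtain ⟨⟨a0, c0⟩⟩ := hne
  have hYne : Nonempty Y := by
    by_contra hY
    have : IsEmpty Y := not_nonempty_iff.mp hY
    have h1 := hnorm a0
    rw [ν.eq_zero_of_isEmpty, lintegral_zero_measure] at h1
    exact zero_ne_one h1
  obtain ⟨y0⟩ := hYne
  have hBne : Nonempty B := by
    by_contra hB
    have : IsEmpty B := not_nonempty_iff.mp hB
    have h1 : (κ y0) Set.univ = 1 := measure_univ
    rw [(κ y0).eq_zero_of_isEmpty] at h1
    exact zero_ne_one h1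
  obtain ⟨b0⟩ := hBne
  obtain ⟨Mg, hMg⟩ := hgbdd
  have hMg0 : 0 ≤ Mg := le_trans (abs_nonneg _) (hMg a0 b0 c0)
  obtain ⟨hcont, h, hh0, hhmeas, ⟨Cb, hCb⟩, ⟨Mh, hMhne, hMhle⟩, hvar⟩ := hC1
  have hgc : Continuous (fun p : A × B × C => g p.1 p.2.1 p.2.2) := hguc.continuous
  have hηaCont : ∀ a : A, Continuous (fun y => η a y) :=
    fun a => hcont.comp (Continuous.prodMk_right a)
  have hηInt : ∀ a : A, Integrable (fun y => η a y) ν := by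
    intro a
    refine ⟨(hηaCont a).aestronglyMeasurable, ?_⟩
    rw [hasFiniteIntegral_iff_norm]
    have he : ∫⁻ y, ENNReal.ofReal ‖η a y‖ ∂ν = 1 := by
      rw [← hnorm a]
      exact lintegral_congr fun y => by rw [Real.norm_of_nonneg (hηnn a y)]
    rw [he]
    exact ENNReal.one_lt_top
  have hηeq : ∀ a : A, ∫ y, η a y ∂ν = 1 := by
    intro a
    rw [integral_eq_lintegral_of_nonneg_ae (ae_of_all _ (hηnn a))
      (hηaCont a).aestronglyMeasurable, hnorm a, ENNReal.toReal_one]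
  have hhaMeas : ∀ a : A, Measurable (fun y => h a y) :=
    fun a => hhmeas.comp (measurable_const.prodMk measurable_id)
  have hhInt : ∀ a : A, Integrable (fun y => h a y) ν := by
    intro a
    refine ⟨(hhaMeas a).aestronglyMeasurable, ?_⟩
    rw [hasFiniteIntegral_iff_norm]
    have he : ∫⁻ y, ENNReal.ofReal ‖h a y‖ ∂ν = ∫⁻ y, ENNReal.ofReal (h a y) ∂ν :=
      lintegral_congr fun y => by rw [Real.norm_of_nonneg (hh0 a y)]
    rw [he]
    exact lt_of_le_of_lt (hMhle a) (lt_top_iff_ne_top.mpr hMhne)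
  have hMh'0 : 0 ≤ Mh.toReal := ENNReal.toReal_nonneg
  have hhint_le : ∀ a : A, ∫ y, h a y ∂ν ≤ Mh.toReal := by
    intro a
    rw [integral_eq_lintegral_of_nonneg_ae (ae_of_all _ (hh0 a))
      (hhaMeas a).aestronglyMeasurable]
    exact ENNReal.toReal_mono hMhne (hMhle a)
  have hgIntB : ∀ (a : A) (c : C) (y : Y), Integrable (fun b => g a b c) (κ y) := by
    intro a c y
    have hc : Continuous (fun b => g a b c) :=
      hgc.comp (continuous_const.prodMk (continuous_id.prodMk continuous_const))
    have hb : ∀ᵐ b ∂(κ y), ‖g a b c‖ ≤ Mg := by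
      filter_upwards with b
      simpa [Real.norm_eq_abs] using hMg a b c
    exact ⟨hc.aestronglyMeasurable, HasFiniteIntegral.of_bounded hb⟩
  have hGmeas : ∀ (a : A) (c : C), StronglyMeasurable (fun y => ∫ b, g a b c ∂(κ y)) := by
    intro a c
    have hsm : StronglyMeasurable (fun p : Y × B => g a p.2 c) :=
      (hgc.comp (continuous_const.prodMk (continuous_snd.prodMk continuous_const))).stronglyMeasurable
    exact hsm.integral_kernel_prod_right'
  have hGbd : ∀ (a : A) (c : C) (y : Y), |∫ b, g a b c ∂(κ y)| ≤ Mg := by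
    intro a c y
    have hb' : ∀ᵐ b ∂(κ y), ‖g a b c‖ ≤ Mg := by
      filter_upwards with b
      simpa [Real.norm_eq_abs] using hMg a b c
    have hb := norm_integral_le_of_norm_le_const (f := fun b => g a b c) hb'
    simpa [Real.norm_eq_abs, measure_univ] using hb
  have hGηInt : ∀ (a : A) (c : C) (a' : A),
      Integrable (fun y => (∫ b, g a b c ∂(κ y)) * η a' y) ν := by
    intro a c a'
    exact (hηInt a').bdd_mul (hGmeas a c).aestronglyMeasurable
      (ae_of_all _ fun y => by simpa [Real.norm_eq_abs] using hGbd a c y)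
  have hbd : ∀ z : A × C, |∫ y, (∫ b, g z.1 b z.2 ∂(κ y)) * η z.1 y ∂ν| ≤ Mg := by
    intro z
    calc |∫ y, (∫ b, g z.1 b z.2 ∂(κ y)) * η z.1 y ∂ν|
        ≤ ∫ y, ‖(∫ b, g z.1 b z.2 ∂(κ y)) * η z.1 y‖ ∂ν := by
          simpa [Real.norm_eq_abs] using
            norm_integral_le_integral_norm (fun y => (∫ b, g z.1 b z.2 ∂(κ y)) * η z.1 y)
      _ ≤ ∫ y, Mg * η z.1 y ∂ν := by
          refine integral_mono_of_nonneg (ae_of_all _ fun y => norm_nonneg _)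
            ((hηInt z.1).const_mul Mg) (ae_of_all _ fun y => ?_)
          simp only [Real.norm_eq_abs, abs_mul, abs_of_nonneg (hηnn z.1 y)]
          exact mul_le_mul_of_nonneg_right (hGbd z.1 z.2 y) (hηnn z.1 y)
      _ = Mg := by rw [integral_const_mul, hηeq z.1, mul_one]
  refine ⟨⟨Mg, hbd⟩, Metric.uniformContinuous_iff.mpr fun ε hε => ?_⟩
  obtain ⟨δ1, hδ1, hguc'⟩ := Metric.uniformContinuous_iff.mp hguc (ε / 2) (by linarith)
  set ε'' := ε / (4 * (Mg + 1) * (Mh.toReal + 1)) with hε''def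
  have hD : (0 : ℝ) < 4 * (Mg + 1) * (Mh.toReal + 1) := by nlinarith
  have hε''pos : 0 < ε'' := div_pos hε hD
  obtain ⟨δ2, hδ2, hvar'⟩ := hvar ε'' hε''pos
  refine ⟨min δ1 δ2, lt_min hδ1 hδ2, fun {z z₀} hdist => ?_⟩
  obtain ⟨a, c⟩ := z
  obtain ⟨a₀, c₀⟩ := z₀
  rw [Prod.dist_eq] at hdist
  have hda : dist a a₀ < min δ1 δ2 := (max_lt_iff.mp hdist).1
  have hdc : dist c c₀ < min δ1 δ2 := (max_lt_iff.mp hdist).2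
  have hda1 : dist a a₀ < δ1 := lt_of_lt_of_le hda (min_le_left _ _)
  have hda2 : dist a a₀ < δ2 := lt_of_lt_of_le hda (min_le_right _ _)
  have hdc1 : dist c c₀ < δ1 := lt_of_lt_of_le hdc (min_le_left _ _)
  have hΔG : ∀ y : Y, |(∫ b, g a b c ∂(κ y)) - ∫ b, g a₀ b c₀ ∂(κ y)| ≤ ε / 2 := by
    intro y
    rw [← integral_sub (hgIntB a c y) (hgIntB a₀ c₀ y)]
    have hb' : ∀ᵐ b ∂(κ y), ‖g a b c - g a₀ b c₀‖ ≤ ε / 2 := by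
      filter_upwards with b
      have hd : dist ((a, b, c) : A × B × C) (a₀, b, c₀) < δ1 := by
        rw [Prod.dist_eq, Prod.dist_eq, dist_self]
        exact max_lt hda1 (max_lt hδ1 hdc1)
      have h2 := hguc' hd
      rw [Real.dist_eq] at h2
      simpa [Real.norm_eq_abs] using h2.le
    have hb := norm_integral_le_of_norm_le_const (f := fun b => g a b c - g a₀ b c₀) hb'
    simpa [Real.norm_eq_abs, measure_univ] using hb
  have hI1 : Integrable (fun y => ((∫ b, g a b c ∂(κ y)) - ∫ b, g a₀ b c₀ ∂(κ y)) * η a y) ν := by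
    have := (hGηInt a c a).sub (hGηInt a₀ c₀ a)
    simpa [sub_mul, Pi.sub_def] using this
  have hI2 : Integrable (fun y => (∫ b, g a₀ b c₀ ∂(κ y)) * (η a y - η a₀ y)) ν := by
    have := (hGηInt a₀ c₀ a).sub (hGηInt a₀ c₀ a₀)
    simpa [mul_sub, Pi.sub_def] using this
  have key : (∫ y, (∫ b, g a b c ∂(κ y)) * η a y ∂ν)
      - (∫ y, (∫ b, g a₀ b c₀ ∂(κ y)) * η a₀ y ∂ν)
      = (∫ y, ((∫ b, g a b c ∂(κ y)) - ∫ b, g a₀ b c₀ ∂(κ y)) * η a y ∂ν)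
        + (∫ y, (∫ b, g a₀ b c₀ ∂(κ y)) * (η a y - η a₀ y) ∂ν) := by
    rw [← integral_sub (hGηInt a c a) (hGηInt a₀ c₀ a₀), ← integral_add hI1 hI2]
    congr 1
    funext y
    ring
  have hT1 : |∫ y, ((∫ b, g a b c ∂(κ y)) - ∫ b, g a₀ b c₀ ∂(κ y)) * η a y ∂ν| ≤ ε / 2 := by
    have h1 : |∫ y, ((∫ b, g a b c ∂(κ y)) - ∫ b, g a₀ b c₀ ∂(κ y)) * η a y ∂ν|
        ≤ ∫ y, ‖((∫ b, g a b c ∂(κ y)) - ∫ b, g a₀ b c₀ ∂(κ y)) * η a y‖ ∂ν := by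
      simpa [Real.norm_eq_abs] using norm_integral_le_integral_norm
        (fun y => ((∫ b, g a b c ∂(κ y)) - ∫ b, g a₀ b c₀ ∂(κ y)) * η a y)
    refine le_trans h1 ?_
    have h2 : ∫ y, ‖((∫ b, g a b c ∂(κ y)) - ∫ b, g a₀ b c₀ ∂(κ y)) * η a y‖ ∂ν
        ≤ ∫ y, (ε / 2) * η a y ∂ν := by
      refine integral_mono_of_nonneg (ae_of_all _ fun y => norm_nonneg _)
        ((hηInt a).const_mul (ε / 2)) (ae_of_all _ fun y => ?_)
      simp only [Real.norm_eq_abs, abs_mul, abs_of_nonneg (hηnn a y)]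
      exact mul_le_mul_of_nonneg_right (hΔG y) (hηnn a y)
    refine le_trans h2 ?_
    rw [integral_const_mul, hηeq a, mul_one]
  have hT2 : |∫ y, (∫ b, g a₀ b c₀ ∂(κ y)) * (η a y - η a₀ y) ∂ν|
      ≤ Mg * (ε'' * Mh.toReal) := by
    have h1 : |∫ y, (∫ b, g a₀ b c₀ ∂(κ y)) * (η a y - η a₀ y) ∂ν|
        ≤ ∫ y, ‖(∫ b, g a₀ b c₀ ∂(κ y)) * (η a y - η a₀ y)‖ ∂ν := by
      simpa [Real.norm_eq_abs] using norm_integral_le_integral_norm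
        (fun y => (∫ b, g a₀ b c₀ ∂(κ y)) * (η a y - η a₀ y))
    refine le_trans h1 ?_
    have h2 : ∫ y, ‖(∫ b, g a₀ b c₀ ∂(κ y)) * (η a y - η a₀ y)‖ ∂ν
        ≤ ∫ y, Mg * (ε'' * h a₀ y) ∂ν := by
      refine integral_mono_of_nonneg (ae_of_all _ fun y => norm_nonneg _)
        (((hhInt a₀).const_mul ε'').const_mul Mg) (ae_of_all _ fun y => ?_)
      simp only [Real.norm_eq_abs, abs_mul]
      exact mul_le_mul (hGbd a₀ c₀ y) (hvar' a₀ a hda2 y).le (abs_nonneg _) hMg0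
    refine le_trans h2 ?_
    rw [integral_const_mul, integral_const_mul]
    exact mul_le_mul_of_nonneg_left
      (mul_le_mul_of_nonneg_left (hhint_le a₀) hε''pos.le) hMg0
  have hsmall : Mg * (ε'' * Mh.toReal) ≤ ε / 4 := by
    have hq : ε'' * (4 * (Mg + 1) * (Mh.toReal + 1)) = ε := div_mul_cancel₀ ε hD.ne'
    nlinarith [mul_nonneg hε''pos.le hMg0, mul_nonneg hε''pos.le hMh'0,
      mul_nonneg (mul_nonneg hε''pos.le hMg0) hMh'0]
  rw [Real.dist_eq, key]
  calc |(∫ y, ((∫ b, g a b c ∂(κ y)) - ∫ b, g a₀ b c₀ ∂(κ y)) * η a y ∂ν)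
        + (∫ y, (∫ b, g a₀ b c₀ ∂(κ y)) * (η a y - η a₀ y) ∂ν)|
      ≤ |∫ y, ((∫ b, g a b c ∂(κ y)) - ∫ b, g a₀ b c₀ ∂(κ y)) * η a y ∂ν|
        + |∫ y, (∫ b, g a₀ b c₀ ∂(κ y)) * (η a y - η a₀ y) ∂ν| := abs_add_le _ _
    _ ≤ ε / 2 + ε / 4 := add_le_add hT1 (le_trans hT2 hsmall)
    _ < ε := by linarith
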